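/- Given any six points in a triangle of unit area, some three of them form a triangle of area at most 1/4. -/

import Mathlib

open MeasureTheory

noncomputable def triArea (p q r : EuclideanSpace ℝ (Fin 2)) : ℝ :=
  (volume (convexHull ℝ ({p, q, r} : Set (EuclideanSpace ℝ (Fin 2))))).toReal

open Pointwise

/-- cross product of (q-p) and (r-p), as coordinates -/
private def cr (x1 y1 x2 y2 x3 y3 : ℝ) : ℝ := (x2-x1)*(y3-y1)-(y2-y1)*(x3-x1)

/-- Z: pair in T_A, if cr with b∈T_B exceeds 1/4 then cr with c∈T_C is ≤ 1/4 -/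
private lemma lemZ (x1 y1 x2 y2 x3 y3 x4 y4 : ℝ)
    (h1 : 0 ≤ x1) (h1' : 0 ≤ y1) (h1s : x1 + y1 ≤ 1/2)
    (h2 : 0 ≤ x2) (h2' : 0 ≤ y2) (h2s : x2 + y2 ≤ 1/2)
    (h3 : 1/2 ≤ x3) (h3' : 0 ≤ y3) (h3s : x3 + y3 ≤ 1)
    (h4 : 0 ≤ x4) (h4' : 1/2 ≤ y4) (h4s : x4 + y4 ≤ 1)
    (hb : 1/4 < cr x1 y1 x2 y2 x3 y3) :
    cr x1 y1 x2 y2 x4 y4 ≤ 1/4 := by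
  unfold cr at *
  rcases le_or_gt (x2 - x1) 0 with ha | ha
  · rcases le_or_gt (y1 - y2) 0 with hβ | hβ
    · -- σ4 : a ≤ 0, β ≤ 0 : F ≤ 1/4, contradiction
      exfalso
      nlinarith [mul_nonneg (by linarith : (0:ℝ) ≤ y2 - y1) (by linarith : (0:ℝ) ≤ x3 - x1),
        mul_nonneg (by linarith : (0:ℝ) ≤ x1 - x2) h3',
        mul_nonneg (by linarith : (0:ℝ) ≤ 1/2 - (x1 - x2)) h1']
    · -- σ3 : a ≤ 0, β ≥ 0 : G ≤ 1/4 directly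
      nlinarith [mul_nonneg (by linarith : (0:ℝ) ≤ x1 - x2) (by linarith : (0:ℝ) ≤ y4 - y1),
        mul_nonneg hβ.le h1,
        mul_nonneg hβ.le (by linarith : (0:ℝ) ≤ 1/2 - x4)]
  · rcases le_or_gt (y1 - y2) (x2 - x1) with hba | hba
    · -- σ1 : a ≥ 0, β ≤ a : F ≤ 1/4, contradiction
      exfalso
      nlinarith [mul_nonneg ha.le (by linarith : (0:ℝ) ≤ 1 - x3 - y3),
        mul_nonneg (by linarith : (0:ℝ) ≤ (x2-x1) - (y1-y2)) (by linarith : (0:ℝ) ≤ x3 - 1/2),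
        mul_nonneg (by linarith : (0:ℝ) ≤ 1/2 - x2 - y2) (by linarith : (0:ℝ) ≤ 1/2 - y1),
        mul_nonneg h2' (by linarith : (0:ℝ) ≤ 1 - x1 - y1)]
    · -- σ2 : a ≥ 0, β ≥ a : G ≤ 1/4
      nlinarith [mul_nonneg (by linarith : (0:ℝ) ≤ y1 - y2) (by linarith : (0:ℝ) ≤ 1 - x4 - y4),
        mul_nonneg (by linarith : (0:ℝ) ≤ (y1-y2) - (x2-x1)) (by linarith : (0:ℝ) ≤ y4 - 1/2),
        mul_nonneg (by linarith : (0:ℝ) ≤ 1/2 - x2 - y2) (by linarith : (0:ℝ) ≤ 1/2 - y1),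
        mul_nonneg h2' (by linarith : (0:ℝ) ≤ 1 - x1 - y1)]

/-- H3: pair in T_A, b∈T_B, c∈T_C : det(a2-a1, c-b) ≤ 1/2 -/
private lemma lemH3 (x1 y1 x2 y2 x3 y3 x4 y4 : ℝ)
    (h1 : 0 ≤ x1) (h1' : 0 ≤ y1) (h1s : x1 + y1 ≤ 1/2)
    (h2 : 0 ≤ x2) (h2' : 0 ≤ y2) (h2s : x2 + y2 ≤ 1/2)
    (h3 : 1/2 ≤ x3) (h3' : 0 ≤ y3) (h3s : x3 + y3 ≤ 1)
    (h4 : 0 ≤ x4) (h4' : 1/2 ≤ y4) (h4s : x4 + y4 ≤ 1) :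
    (x2-x1)*(y4-y3)-(y2-y1)*(x4-x3) ≤ 1/2 := by
  rcases le_or_gt (x2 - x1) 0 with ha | ha <;> rcases le_or_gt (y2 - y1) 0 with hB | hB
  · -- a ≤ 0, b ≤ 0
    nlinarith [mul_nonneg (by linarith : (0:ℝ) ≤ x1 - x2) (by linarith : (0:ℝ) ≤ y4 - y3),
      mul_nonneg (by linarith : (0:ℝ) ≤ 1/2 - (y1 - y2)) (by linarith : (0:ℝ) ≤ x3 - x4)]
  · -- a ≤ 0, b ≥ 0
    nlinarith [mul_nonneg (by linarith : (0:ℝ) ≤ x1 - x2) (by linarith : (0:ℝ) ≤ y4 - y3),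
      mul_nonneg hB.le (by linarith : (0:ℝ) ≤ x3 - x4)]
  · -- a ≥ 0, b ≤ 0
    nlinarith [mul_nonneg (by linarith : (0:ℝ) ≤ y1 - y2) (by linarith : (0:ℝ) ≤ x3 - x4),
      mul_nonneg ha.le (by linarith : (0:ℝ) ≤ 1 - (y4 - y3))]
  · -- a ≥ 0, b ≥ 0
    nlinarith [mul_nonneg ha.le (by linarith : (0:ℝ) ≤ 1 - (y4 - y3)),
      mul_nonneg hB.le (by linarith : (0:ℝ) ≤ 1 + (x4 - x3))]



private lemma sq_onesided (x1 y1 x2 y2 x3 y3 : ℝ)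
    (hx1 : 0 ≤ x1) (hx1' : x1 ≤ 1/2) (hy1 : 0 ≤ y1) (hy1' : y1 ≤ 1/2)
    (hx2 : 0 ≤ x2) (hx2' : x2 ≤ 1/2) (hy2 : 0 ≤ y2) (hy2' : y2 ≤ 1/2)
    (hx3 : 0 ≤ x3) (hx3' : x3 ≤ 1/2) (hy3 : 0 ≤ y3) (hy3' : y3 ≤ 1/2) :
    cr x1 y1 x2 y2 x3 y3 ≤ 1/4 := by
  unfold cr
  rcases le_or_gt x1 x2 with ha | ha <;> rcases le_or_gt y1 y2 with hc | hc
  · nlinarith [mul_nonneg (sub_nonneg.2 ha) (sub_nonneg.2 hy3'), mul_nonneg (sub_nonneg.2 hc) hx1,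
      mul_nonneg (sub_nonneg.2 hc) (sub_nonneg.2 (le_trans ha hx2'))]
  · nlinarith [mul_nonneg (sub_nonneg.2 ha) (sub_nonneg.2 hy3'),
      mul_nonneg (sub_nonneg.2 hc.le) (sub_nonneg.2 hx1'),
      mul_nonneg (sub_nonneg.2 (le_trans hc.le hy1')) (sub_nonneg.2 hx1')]
  · nlinarith [mul_nonneg (sub_nonneg.2 ha.le) hy1, mul_nonneg (sub_nonneg.2 ha.le) (sub_nonneg.2 hy1'),
      mul_nonneg (sub_nonneg.2 hc) hx1, mul_nonneg (sub_nonneg.2 hc) hx3]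
  · nlinarith [mul_nonneg (sub_nonneg.2 ha.le) hy1, mul_nonneg (sub_nonneg.2 hc.le) (sub_nonneg.2 hx1'),
      mul_nonneg (sub_nonneg.2 ha.le) hy3, mul_nonneg (sub_nonneg.2 hc.le) hx3]

/-- three points in the square [0,1/2]² have |cr| ≤ 1/4 -/
private lemma sq_bound (x1 y1 x2 y2 x3 y3 : ℝ)
    (hx1 : 0 ≤ x1) (hx1' : x1 ≤ 1/2) (hy1 : 0 ≤ y1) (hy1' : y1 ≤ 1/2)
    (hx2 : 0 ≤ x2) (hx2' : x2 ≤ 1/2) (hy2 : 0 ≤ y2) (hy2' : y2 ≤ 1/2)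
    (hx3 : 0 ≤ x3) (hx3' : x3 ≤ 1/2) (hy3 : 0 ≤ y3) (hy3' : y3 ≤ 1/2) :
    |cr x1 y1 x2 y2 x3 y3| ≤ 1/4 := by
  rw [abs_le]
  constructor
  · have h := sq_onesided x1 y1 x3 y3 x2 y2 hx1 hx1' hy1 hy1' hx3 hx3' hy3 hy3' hx2 hx2' hy2 hy2'
    have e : cr x1 y1 x3 y3 x2 y2 = -cr x1 y1 x2 y2 x3 y3 := by unfold cr; ring
    linarith
  · exact sq_onesided x1 y1 x2 y2 x3 y3 hx1 hx1' hy1 hy1' hx2 hx2' hy2 hy2' hx3 hx3' hy3 hy3'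

/-- parallelogram below-right: 0≤y≤1/2, 1/2≤x+y≤1 -/
private lemma parB_bound (x1 y1 x2 y2 x3 y3 : ℝ)
    (hy1 : 0 ≤ y1) (hy1' : y1 ≤ 1/2) (hs1 : 1/2 ≤ x1 + y1) (hs1' : x1 + y1 ≤ 1)
    (hy2 : 0 ≤ y2) (hy2' : y2 ≤ 1/2) (hs2 : 1/2 ≤ x2 + y2) (hs2' : x2 + y2 ≤ 1)
    (hy3 : 0 ≤ y3) (hy3' : y3 ≤ 1/2) (hs3 : 1/2 ≤ x3 + y3) (hs3' : x3 + y3 ≤ 1) :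
    |cr x1 y1 x2 y2 x3 y3| ≤ 1/4 := by
  have h := sq_bound (x1+y1-1/2) y1 (x2+y2-1/2) y2 (x3+y3-1/2) y3
    (by linarith) (by linarith) hy1 hy1' (by linarith) (by linarith) hy2 hy2'
    (by linarith) (by linarith) hy3 hy3'
  have e : cr (x1+y1-1/2) y1 (x2+y2-1/2) y2 (x3+y3-1/2) y3 = cr x1 y1 x2 y2 x3 y3 := by
    unfold cr; ring
  rwa [e] at h

/-- parallelogram upper-left: 0≤x≤1/2, 1/2≤x+y≤1 -/
private lemma parC_bound (x1 y1 x2 y2 x3 y3 : ℝ)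
    (hx1 : 0 ≤ x1) (hx1' : x1 ≤ 1/2) (hs1 : 1/2 ≤ x1 + y1) (hs1' : x1 + y1 ≤ 1)
    (hx2 : 0 ≤ x2) (hx2' : x2 ≤ 1/2) (hs2 : 1/2 ≤ x2 + y2) (hs2' : x2 + y2 ≤ 1)
    (hx3 : 0 ≤ x3) (hx3' : x3 ≤ 1/2) (hs3 : 1/2 ≤ x3 + y3) (hs3' : x3 + y3 ≤ 1) :
    |cr x1 y1 x2 y2 x3 y3| ≤ 1/4 := by
  have h := sq_bound x1 (x1+y1-1/2) x2 (x2+y2-1/2) x3 (x3+y3-1/2)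
    hx1 hx1' (by linarith) (by linarith) hx2 hx2' (by linarith) (by linarith)
    hx3 hx3' (by linarith) (by linarith)
  have e : cr x1 (x1+y1-1/2) x2 (x2+y2-1/2) x3 (x3+y3-1/2) = cr x1 y1 x2 y2 x3 y3 := by
    unfold cr; ring
  rwa [e] at h

/-- pair in T_A, b in T_B, c in T_C: one of the two triangles is small -/
private lemma kA (x1 y1 x2 y2 x3 y3 x4 y4 : ℝ)
    (h1 : 0 ≤ x1) (h1' : 0 ≤ y1) (h1s : x1 + y1 ≤ 1/2)
    (h2 : 0 ≤ x2) (h2' : 0 ≤ y2) (h2s : x2 + y2 ≤ 1/2)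
    (h3 : 1/2 ≤ x3) (h3' : 0 ≤ y3) (h3s : x3 + y3 ≤ 1)
    (h4 : 0 ≤ x4) (h4' : 1/2 ≤ y4) (h4s : x4 + y4 ≤ 1) :
    |cr x1 y1 x2 y2 x3 y3| ≤ 1/4 ∨ |cr x1 y1 x2 y2 x4 y4| ≤ 1/4 := by
  by_contra hcon
  push_neg at hcon
  obtain ⟨hF, hG⟩ := hcon
  rw [lt_abs] at hF hG
  have hH3 := lemH3 x1 y1 x2 y2 x3 y3 x4 y4 h1 h1' h1s h2 h2' h2s h3 h3' h3s h4 h4' h4s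
  have hH3' := lemH3 x2 y2 x1 y1 x3 y3 x4 y4 h2 h2' h2s h1 h1' h1s h3 h3' h3s h4 h4' h4s
  rcases hF with hF | hF
  · -- F > 1/4 : Z gives G ≤ 1/4, so G < -1/4; but F - G ≤ 1/2
    have hZ := lemZ x1 y1 x2 y2 x3 y3 x4 y4 h1 h1' h1s h2 h2' h2s h3 h3' h3s h4 h4' h4s hF
    have hG' : cr x1 y1 x2 y2 x4 y4 < -(1/4) := by
      rcases hG with h | h
      · exact absurd hZ (not_le.2 h)
      · linarith
    unfold cr at *; linarith
  · -- F < -1/4 : swapped Z gives -G ≤ 1/4 hence G > 1/4; G - F ≤ 1/2 contra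
    have hF2 : 1/4 < cr x2 y2 x1 y1 x3 y3 := by unfold cr at *; linarith
    have hZ := lemZ x2 y2 x1 y1 x3 y3 x4 y4 h2 h2' h2s h1 h1' h1s h3 h3' h3s h4 h4' h4s hF2
    have hG' : 1/4 < cr x1 y1 x2 y2 x4 y4 := by
      rcases hG with h | h
      · exact h
      · exfalso; unfold cr at *; linarith
    unfold cr at *; linarith
open Finset in
/-- The key combinatorial lemma in barycentric-like coordinates. -/
private lemma key (u v : Fin 6 → ℝ) (hu : ∀ i, 0 ≤ u i) (hv : ∀ i, 0 ≤ v i)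
    (hs : ∀ i, u i + v i ≤ 1) :
    ∃ i j k : Fin 6, i ≠ j ∧ i ≠ k ∧ j ≠ k ∧
      |cr (u i) (v i) (u j) (v j) (u k) (v k)| ≤ 1/4 := by
  classical
  obtain ⟨g, g0, g1, g2, g3⟩ :
      ∃ g : Fin 6 → Fin 4, (∀ i, g i = 0 → u i + v i ≤ 1/2) ∧
        (∀ i, g i = 1 → 1/2 ≤ u i) ∧
        (∀ i, g i = 2 → 1/2 ≤ v i ∧ u i ≤ 1/2) ∧
        (∀ i, g i = 3 → u i ≤ 1/2 ∧ v i ≤ 1/2 ∧ 1/2 ≤ u i + v i) := by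
    refine ⟨fun i => if u i + v i ≤ 1/2 then 0 else if 1/2 ≤ u i then 1
      else if 1/2 ≤ v i then 2 else 3, ?_, ?_, ?_, ?_⟩ <;> intro i hi <;>
      simp only [] at hi <;> split_ifs at hi with c1 c2 c3 <;>
      first
        | exact absurd hi (by decide)
        | exact c1
        | exact c2
        | exact ⟨c3, by linarith⟩
        | exact ⟨by linarith, by linarith, by linarith⟩
  have hne : ∀ (i j : Fin 6) (ri rj : Fin 4), ri ≠ rj → g i = ri → g j = rj → i ≠ j := by
    intro i j ri rj hne hi hj h
    rw [h, hj] at hi; exact hne hi.symm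
  set s : Fin 4 → Finset (Fin 6) := fun r => univ.filter (fun i => g i = r) with hsdef
  have hmem : ∀ r i, i ∈ s r ↔ g i = r := by intro r i; simp [hsdef]
  have hcard : (s 0).card + (s 1).card + (s 2).card + (s 3).card = 6 := by
    have h := Finset.card_eq_sum_card_fiberwise
      (f := g) (s := (univ : Finset (Fin 6))) (t := (univ : Finset (Fin 4)))
      (fun x _ => mem_univ _)
    simp only [card_univ, Fintype.card_fin] at h
    rw [Fin.sum_univ_four] at h
    simpa [hsdef] using h.symm
  by_cases hbig : ∃ r, 2 < (s r).card
  · -- three points in one region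
    obtain ⟨r, hr⟩ := hbig
    rw [Finset.two_lt_card] at hr
    obtain ⟨i, hi, j, hj, k, hk, hij, hik, hjk⟩ := hr
    rw [hmem] at hi hj hk
    refine ⟨i, j, k, hij, hik, hjk, ?_⟩
    fin_cases r
    · have h1 := g0 i hi; have h2 := g0 j hj; have h3 := g0 k hk
      exact sq_bound _ _ _ _ _ _ (hu i) (by linarith [hv i]) (hv i) (by linarith [hu i])
        (hu j) (by linarith [hv j]) (hv j) (by linarith [hu j])
        (hu k) (by linarith [hv k]) (hv k) (by linarith [hu k])
    · have h1 := g1 i hi; have h2 := g1 j hj; have h3 := g1 k hk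
      exact parB_bound _ _ _ _ _ _ (hv i) (by linarith [hs i]) (by linarith [hv i]) (hs i)
        (hv j) (by linarith [hs j]) (by linarith [hv j]) (hs j)
        (hv k) (by linarith [hs k]) (by linarith [hv k]) (hs k)
    · have h1 := g2 i hi; have h2 := g2 j hj; have h3 := g2 k hk
      exact parC_bound _ _ _ _ _ _ (hu i) h1.2 (by linarith [h1.1, hu i]) (hs i)
        (hu j) h2.2 (by linarith [h2.1, hu j]) (hs j)
        (hu k) h3.2 (by linarith [h3.1, hu k]) (hs k)
    · have h1 := g3 i hi; have h2 := g3 j hj; have h3 := g3 k hk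
      exact sq_bound _ _ _ _ _ _ (hu i) h1.1 (hv i) h1.2.1 (hu j) h2.1 (hv j) h2.2.1
        (hu k) h3.1 (hv k) h3.2.1
  · push_neg at hbig
    by_cases hM : (s 3).Nonempty
    · -- a middle point plus a pair in some corner
      obtain ⟨m, hm⟩ := hM
      rw [hmem] at hm
      have hm3 := g3 m hm
      have hMult : 1 < (s 0).card ∨ 1 < (s 1).card ∨ 1 < (s 2).card := by
        have h0 := hbig 0; have h1 := hbig 1; have h2 := hbig 2; have h3 := hbig 3
        omega
      rcases hMult with hc | hc | hc <;> rw [Finset.one_lt_card] at hc <;>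
        obtain ⟨i, hi, j, hj, hij⟩ := hc <;> rw [hmem] at hi hj
      · refine ⟨i, j, m, hij, hne i m 0 3 (by decide) hi hm, hne j m 0 3 (by decide) hj hm, ?_⟩
        have h1 := g0 i hi; have h2 := g0 j hj
        exact sq_bound _ _ _ _ _ _ (hu i) (by linarith [hv i]) (hv i) (by linarith [hu i])
          (hu j) (by linarith [hv j]) (hv j) (by linarith [hu j])
          (hu m) hm3.1 (hv m) hm3.2.1
      · refine ⟨i, j, m, hij, hne i m 1 3 (by decide) hi hm, hne j m 1 3 (by decide) hj hm, ?_⟩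
        have h1 := g1 i hi; have h2 := g1 j hj
        exact parB_bound _ _ _ _ _ _ (hv i) (by linarith [hs i]) (by linarith [hv i]) (hs i)
          (hv j) (by linarith [hs j]) (by linarith [hv j]) (hs j)
          (hv m) hm3.2.1 hm3.2.2 (hs m)
      · refine ⟨i, j, m, hij, hne i m 2 3 (by decide) hi hm, hne j m 2 3 (by decide) hj hm, ?_⟩
        have h1 := g2 i hi; have h2 := g2 j hj
        exact parC_bound _ _ _ _ _ _ (hu i) h1.2 (by linarith [h1.1, hu i]) (hs i)
          (hu j) h2.2 (by linarith [h2.1, hu j]) (hs j)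
          (hu m) hm3.1 hm3.2.2 (hs m)
    · -- corners (2,2,2): use kA
      have h3card : (s 3).card = 0 := by
        rw [Finset.card_eq_zero]; exact Finset.not_nonempty_iff_eq_empty.1 hM
      have hA : 1 < (s 0).card := by
        have h1 := hbig 1; have h2 := hbig 2; omega
      have hB : (s 1).Nonempty := by
        rw [← Finset.card_pos]; have h0 := hbig 0; have h2 := hbig 2; omega
      have hC : (s 2).Nonempty := by
        rw [← Finset.card_pos]; have h0 := hbig 0; have h1 := hbig 1; omega
      rw [Finset.one_lt_card] at hA
      obtain ⟨i, hi, j, hj, hij⟩ := hA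
      obtain ⟨b, hb⟩ := hB
      obtain ⟨c, hc⟩ := hC
      rw [hmem] at hi hj hb hc
      have h1 := g0 i hi; have h2 := g0 j hj
      have hb2 := g1 b hb; have hc2 := g2 c hc
      have hK := kA (u i) (v i) (u j) (v j) (u b) (v b) (u c) (v c)
        (hu i) (hv i) h1 (hu j) (hv j) h2
        hb2 (hv b) (hs b) (hu c) hc2.1 (hs c)
      rcases hK with hK | hK
      · exact ⟨i, j, b, hij, hne i b 0 1 (by decide) hi hb, hne j b 0 1 (by decide) hj hb, hK⟩
      · exact ⟨i, j, c, hij, hne i c 0 2 (by decide) hi hc, hne j c 0 2 (by decide) hj hc, hK⟩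



noncomputable abbrev E2 := EuclideanSpace ℝ (Fin 2)

noncomputable def cr3 (p q r : E2) : ℝ :=
  (q 0 - p 0) * (r 1 - p 1) - (q 1 - p 1) * (r 0 - p 0)

lemma vol_formula : ∃ c : ENNReal, c ≠ ⊤ ∧ ∀ p q r : E2,
    volume (convexHull ℝ ({p, q, r} : Set E2)) = c * ENNReal.ofReal |cr3 p q r| := by
  classical
  set B0 := (EuclideanSpace.basisFun (Fin 2) ℝ).toBasis with hB0
  set T0 : Set E2 := {0, B0 0, B0 1} with hT0
  refine ⟨volume (convexHull ℝ T0), ?_, ?_⟩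
  · exact (((Set.finite_singleton _).insert _).insert _ |>.isCompact_convexHull ℝ).measure_lt_top.ne
  intro p q r
  set L : E2 →ₗ[ℝ] E2 := B0.constr ℝ ![q - p, r - p] with hL
  have himg : L '' T0 = {0, q - p, r - p} := by
    simp only [hT0, Set.image_insert_eq, Set.image_singleton, map_zero]
    rw [show L (B0 0) = q - p from by rw [hL, Module.Basis.constr_basis]; rfl,
        show L (B0 1) = r - p from by rw [hL, Module.Basis.constr_basis]; rfl]
  have hset : ({p, q, r} : Set E2) = p +ᵥ (L '' T0) := by
    rw [himg, ← Set.image_vadd]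
    simp only [Set.image_insert_eq, Set.image_singleton, vadd_eq_add]
    rw [add_zero, add_sub_cancel, add_sub_cancel]
  have hdet : LinearMap.det L = cr3 p q r := by
    rw [← LinearMap.det_toMatrix B0]
    have hm : LinearMap.toMatrix B0 B0 L = !![(q-p) 0, (r-p) 0; (q-p) 1, (r-p) 1] := by
      ext i j
      rw [LinearMap.toMatrix_apply]
      fin_cases i <;> fin_cases j <;>
        simp [hL, Module.Basis.constr_basis] <;> rfl
    rw [hm, Matrix.det_fin_two_of]
    simp only [cr3, PiLp.sub_apply]
    ring
  rw [hset, convexHull_vadd, measure_vadd, ← LinearMap.image_convexHull,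
    Measure.addHaar_image_linearMap, hdet, mul_comm]

lemma decomp (A B C x : E2) (hx : x ∈ convexHull ℝ ({A, B, C} : Set E2)) :
    ∃ u v : ℝ, 0 ≤ u ∧ 0 ≤ v ∧ u + v ≤ 1 ∧
      ∀ d : Fin 2, x d = (1 - u - v) * A d + u * B d + v * C d := by
  rw [show ({A, B, C} : Set E2) = insert A {B, C} from rfl,
    convexHull_insert ⟨B, by simp⟩, mem_convexJoin] at hx
  obtain ⟨A', hA', z, hz, hseg⟩ := hx
  rw [Set.mem_singleton_iff] at hA'
  rw [hA'] at hseg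
  rw [convexHull_pair] at hz
  obtain ⟨a, b, ha, hb, hab, hzeq⟩ := hz
  obtain ⟨s, t, hs, ht, hst, hxeq⟩ := hseg
  refine ⟨t * a, t * b, by positivity, by positivity, by nlinarith, ?_⟩
  intro d
  have h1 : x d = s * A d + t * z d := by
    rw [← hxeq]; simp [PiLp.add_apply, PiLp.smul_apply, smul_eq_mul]
  have h2 : z d = a * B d + b * C d := by
    rw [← hzeq]; simp [PiLp.add_apply, PiLp.smul_apply, smul_eq_mul]
  have e1 : s = 1 - t := by linarith
  have e2 : b = 1 - a := by linarith
  rw [h1, h2, e1, e2]; ring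

theorem stmt_6 (A B C : EuclideanSpace ℝ (Fin 2)) (hABC : triArea A B C = 1)
    (p : Fin 6 → EuclideanSpace ℝ (Fin 2))
    (hp : ∀ i, p i ∈ convexHull ℝ ({A, B, C} : Set (EuclideanSpace ℝ (Fin 2)))) :
    ∃ i j k : Fin 6, i ≠ j ∧ i ≠ k ∧ j ≠ k ∧ triArea (p i) (p j) (p k) ≤ 1 / 4 := by
  obtain ⟨c, hc, hvol⟩ := vol_formula
  have harea : ∀ p q r : E2, triArea p q r = c.toReal * |cr3 p q r| := by
    intro p q r
    rw [triArea, hvol, ENNReal.toReal_mul, ENNReal.toReal_ofReal (abs_nonneg _)]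
  choose u v hu hv huv hcoord using fun i => decomp A B C (p i) (hp i)
  obtain ⟨i, j, k, hij, hik, hjk, hcr⟩ := key u v hu hv huv
  refine ⟨i, j, k, hij, hik, hjk, ?_⟩
  have e : cr3 (p i) (p j) (p k)
      = cr (u i) (v i) (u j) (v j) (u k) (v k) * cr3 A B C := by
    simp only [cr3, cr, hcoord i 0, hcoord i 1, hcoord j 0, hcoord j 1,
      hcoord k 0, hcoord k 1]
    ring
  have hABC' : c.toReal * |cr3 A B C| = 1 := by rw [← harea]; exact hABC
  rw [harea, e, abs_mul]
  calc c.toReal * (|cr (u i) (v i) (u j) (v j) (u k) (v k)| * |cr3 A B C|)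
      = |cr (u i) (v i) (u j) (v j) (u k) (v k)| * (c.toReal * |cr3 A B C|) := by ring
    _ ≤ 1/4 := by rw [hABC']; simpa using hcr
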